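/- Let α, β : ℝ → ℝ be continuous with α(u) > 0 and β(u) > 0 for all u, let u : [0,T] → ℝ be continuous, and let m : [0,T] → ℝ be differentiable satisfying m'(t) = α(u(t))(1 - m(t)) - β(u(t)) m(t) for all t ∈ [0,T]. If 0 ≤ m(0) ≤ 1, then 0 ≤ m(t) ≤ 1 for all t ∈ [0,T]. -/
import Mathlib

open Filter Topology Set

/-- Barrier lemma: if `m` has derivative `g` on `[0,T]`, `g` is strictly
positive wherever `m` vanishes, and `m 0 ≥ 0`, then `m ≥ 0` on `[0,T]`. -/
lemma gating_aux_nonneg (T : ℝ) (m g : ℝ → ℝ)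
    (hm : ∀ s ∈ Set.Icc (0:ℝ) T, HasDerivAt m (g s) s)
    (hg : ∀ s ∈ Set.Icc (0:ℝ) T, m s = 0 → 0 < g s)
    (h0 : 0 ≤ m 0) : ∀ t ∈ Set.Icc (0:ℝ) T, 0 ≤ m t := by
  intro t ht
  by_contra hneg
  push_neg at hneg
  have hcontOn : ContinuousOn m (Set.Icc 0 T) := fun x hx =>
    ((hm x hx).continuousAt).continuousWithinAt
  set S : Set ℝ := Set.Icc 0 t ∩ m ⁻¹' Set.Ici 0 with hSdef
  have hsub : Set.Icc 0 t ⊆ Set.Icc 0 T := Set.Icc_subset_Icc_right ht.2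
  have hSne : S.Nonempty := ⟨0, ⟨le_refl 0, ht.1⟩, h0⟩
  have hSbdd : BddAbove S := ⟨t, fun x hx => hx.1.2⟩
  have hSclosed : IsClosed S :=
    (hcontOn.mono hsub).preimage_isClosed_of_isClosed isClosed_Icc isClosed_Ici
  have hsS : sSup S ∈ S := hSclosed.csSup_mem hSne hSbdd
  set s := sSup S with hs
  have hms0 : (0:ℝ) ≤ m s := hsS.2
  have hsT : s ∈ Set.Icc 0 T := hsub hsS.1
  have hst : s < t := lt_of_le_of_ne hsS.1.2 (fun h => absurd (h ▸ hms0) (not_le.2 hneg))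
  have key : ∀ᶠ r in 𝓝[>] s, 0 ≤ m r := by
    rcases lt_or_eq_of_le hms0 with hpos | hzero
    · have h1 : ∀ᶠ r in 𝓝 s, 0 < m r :=
        (hm s hsT).continuousAt.eventually (eventually_gt_nhds hpos)
      exact (h1.filter_mono nhdsWithin_le_nhds).mono fun r hr => hr.le
    · have hgs : 0 < g s := hg s hsT hzero.symm
      have hslope := hasDerivAt_iff_tendsto_slope.1 (hm s hsT)
      have h1 : ∀ᶠ r in 𝓝[≠] s, 0 < slope m s r :=
        hslope.eventually (eventually_gt_nhds hgs)
      have h2 : ∀ᶠ r in 𝓝[>] s, 0 < slope m s r :=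
        h1.filter_mono (nhdsWithin_mono s fun x hx => ne_of_gt hx)
      filter_upwards [h2, self_mem_nhdsWithin] with r hr hrs
      have hrs' : (0:ℝ) < r - s := sub_pos.2 hrs
      have hmul : 0 < slope m s r * (r - s) := mul_pos hr hrs'
      rw [slope_def_field, div_mul_cancel₀ _ (ne_of_gt hrs')] at hmul
      linarith [hzero]
  have hIoo : Set.Ioo s t ∈ 𝓝[>] s := Ioo_mem_nhdsGT_of_mem ⟨le_refl s, hst⟩
  obtain ⟨r, hr0, hrI⟩ := (key.and (eventually_of_mem hIoo fun _ h => h)).exists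
  have hrS : r ∈ S := ⟨⟨le_trans hsS.1.1 hrI.1.le, hrI.2.le⟩, hr0⟩
  have : r ≤ s := le_csSup hSbdd hrS
  exact absurd hrI.1 (not_lt.2 this)

/-- Proposition 1 (gating variable invariance): if the gating variable `m`
solves `m' = α(u(t))(1-m) - β(u(t)) m` on `[0,T]` with continuous positive
rates and `m 0 ∈ [0,1]`, then `m t ∈ [0,1]` on `[0,T]`. -/
theorem gating_invariance
    (T : ℝ) (hT : 0 < T)
    (α β : ℝ → ℝ) (hα : Continuous α) (hβ : Continuous β)
    (hαpos : ∀ v, 0 < α v) (hβpos : ∀ v, 0 < β v)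
    (u m : ℝ → ℝ)
    (hu : ContinuousOn u (Set.Icc 0 T))
    (hm : ∀ t ∈ Set.Icc (0:ℝ) T,
      HasDerivAt m (α (u t) * (1 - m t) - β (u t) * m t) t)
    (h0 : 0 ≤ m 0) (h1 : m 0 ≤ 1) :
    ∀ t ∈ Set.Icc (0:ℝ) T, 0 ≤ m t ∧ m t ≤ 1 := by
  intro t ht
  constructor
  · refine gating_aux_nonneg T m (fun s => α (u s) * (1 - m s) - β (u s) * m s)
      hm (fun s hs hms => ?_) h0 t ht
    show 0 < α (u s) * (1 - m s) - β (u s) * m s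
    rw [hms]
    simpa using hαpos (u s)
  · have := gating_aux_nonneg T (fun r => 1 - m r)
      (fun s => -(α (u s) * (1 - m s) - β (u s) * m s))
      (fun s hs => (hm s hs).const_sub 1)
      (fun s hs hms => ?_) (by show (0:ℝ) ≤ 1 - m 0; linarith) t ht
    · have h' : (0:ℝ) ≤ 1 - m t := this
      linarith
    · have hms' : 1 - m s = 0 := hms
      have hm1 : m s = 1 := by linarith
      show 0 < -(α (u s) * (1 - m s) - β (u s) * m s)
      rw [hm1]
      simpa using hβpos (u s)
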